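/- Let α ≥ 2 and κ ≥ ω be cardinals, let μ be a cardinal with κ ≤ μ ≤ 2^{(α^{<κ})}, and set E := (D(α))^μ. If there is a cardinal ν < κ such that 2^{(α^ν)} = 2^{(α^{<κ})}, then d(E_κ) = α^{<κ}. -/

import Mathlib

open Cardinal TopologicalSpace Set

universe u

/-- The `κ`-box topology on a product of topological spaces: generated by the boxes
`Π i, U i` with each `U i` open and fewer than `κ` coordinates restricted. -/
def boxTopology (κ : Cardinal.{u}) {ι : Type u} (X : ι → Type u)
    [∀ i, TopologicalSpace (X i)] : TopologicalSpace (∀ i, X i) :=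
  TopologicalSpace.generateFrom
    {S | ∃ U : ∀ i, Set (X i), (∀ i, IsOpen (U i)) ∧
      #{i | U i ≠ Set.univ} < κ ∧ S = Set.pi Set.univ U}

/-- The density character of a topological space: the least cardinality of a dense subset
(finite values allowed). -/
noncomputable def dens (X : Type u) [TopologicalSpace X] : Cardinal.{u} :=
  sInf {c | ∃ D : Set X, Dense D ∧ #D = c}

/-- auxiliary: a family of types realizing all cardinals `< κ`, indexed by a type of size `κ`. -/
noncomputable def LjT (κ : Cardinal.{u}) (j : (Cardinal.ord κ).ToType) : Type u :=
  (((Ordinal.ToType.mk (o := κ.ord)).symm j : Set.Iio κ.ord) : Ordinal).ToType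

lemma LjT_lt (κ : Cardinal.{u}) (j : (Cardinal.ord κ).ToType) : #(LjT κ j) < κ := by
  rw [LjT, Cardinal.mk_toType]
  exact Cardinal.lt_ord.mp ((Ordinal.ToType.mk (o := κ.ord)).symm j).2

lemma LjT_exists (κ : Cardinal.{u}) {c : Cardinal.{u}} (hc : c < κ) :
    ∃ j, #(LjT κ j) = c := by
  refine ⟨Ordinal.ToType.mk (o := κ.ord) ⟨c.ord, Cardinal.ord_lt_ord.mpr hc⟩, ?_⟩
  rw [LjT, OrderIso.symm_apply_apply, Cardinal.mk_toType, Cardinal.card_ord]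

open scoped Classical in
noncomputable def approx {B M A : Type u} (e : M → Set B) (L : Type u)
    (F : L → B) (G : L → L → Prop) (hv : L → A) (a₀ : A) (m : M) : A :=
  if hj : ∃ j, (fun l => F l ∈ e m) = G j then hv hj.choose else a₀

lemma dense_box {κ : Cardinal.{u}} (hκ : ℵ₀ ≤ κ) {ι : Type u} {X : ι → Type u}
    [∀ i, TopologicalSpace (X i)] {D : Set (∀ i, X i)}
    (hD : ∀ U : ∀ i, Set (X i), (∀ i, IsOpen (U i)) → #{i | U i ≠ Set.univ} < κ →
      (Set.pi Set.univ U).Nonempty → ((Set.pi Set.univ U) ∩ D).Nonempty) :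
    @Dense _ (boxTopology κ X) D := by
  refine (@dense_iff_inter_open _ (boxTopology κ X) D).mpr ?_
  intro W hW hWn
  have hgen : TopologicalSpace.GenerateOpen
      {S | ∃ U : ∀ i, Set (X i), (∀ i, IsOpen (U i)) ∧
        #{i | U i ≠ Set.univ} < κ ∧ S = Set.pi Set.univ U} W := hW
  have key : ∀ (W : Set (∀ i, X i)), TopologicalSpace.GenerateOpen
      {S | ∃ U : ∀ i, Set (X i), (∀ i, IsOpen (U i)) ∧
        #{i | U i ≠ Set.univ} < κ ∧ S = Set.pi Set.univ U} W →
      ∀ x ∈ W, ∃ U : ∀ i, Set (X i), (∀ i, IsOpen (U i)) ∧ #{i | U i ≠ Set.univ} < κ ∧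
        x ∈ Set.pi Set.univ U ∧ Set.pi Set.univ U ⊆ W := by
    intro W hW
    induction hW with
    | basic s hs =>
      obtain ⟨U, hUo, hUc, rfl⟩ := hs
      exact fun x hx => ⟨U, hUo, hUc, hx, subset_rfl⟩
    | univ =>
      refine fun x _ => ⟨fun _ => Set.univ, fun _ => isOpen_univ, ?_, by simp, by simp⟩
      simpa using lt_of_lt_of_le aleph0_pos hκ
    | inter s t hs ht ihs iht =>
      intro x hx
      obtain ⟨U₁, hU₁o, hU₁c, hxV₁, hV₁⟩ := ihs x hx.1
      obtain ⟨U₂, hU₂o, hU₂c, hxV₂, hV₂⟩ := iht x hx.2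
      refine ⟨fun i => U₁ i ∩ U₂ i, fun i => (hU₁o i).inter (hU₂o i), ?_, ?_, ?_⟩
      · refine lt_of_le_of_lt ?_ (Cardinal.add_lt_of_lt hκ hU₁c hU₂c)
        refine le_trans (Cardinal.mk_le_mk_of_subset (t := {i | U₁ i ≠ Set.univ} ∪ {i | U₂ i ≠ Set.univ}) ?_) (Cardinal.mk_union_le _ _)
        intro i hi
        by_contra hno
        simp only [Set.mem_union, Set.mem_setOf_eq] at hno
        push_neg at hno
        exact hi (by simp [Set.mem_setOf_eq] at hi ⊢; simp [hno.1, hno.2])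
      · rw [Set.pi_inter_distrib]; exact ⟨hxV₁, hxV₂⟩
      · rw [Set.pi_inter_distrib]; exact Set.inter_subset_inter hV₁ hV₂
    | sUnion S hS ih =>
      intro x hx
      obtain ⟨s, hsS, hxs⟩ := hx
      obtain ⟨U, h1, h2, h3, h4⟩ := ih s hsS x hxs
      exact ⟨U, h1, h2, h3, h4.trans (Set.subset_sUnion_of_mem hsS)⟩
  obtain ⟨x, hx⟩ := hWn
  obtain ⟨U, hUo, hUc, hxV, hVU⟩ := key W hgen x hx
  obtain ⟨y, hy, hyD⟩ := hD U hUo hUc ⟨x, hxV⟩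
  exact ⟨y, hVU hy, hyD⟩

theorem stmt11 (α κ μ : Cardinal.{u}) (hα : 2 ≤ α) (hκ : ℵ₀ ≤ κ)
    (hμ1 : κ ≤ μ) (hμ2 : μ ≤ (2 : Cardinal.{u}) ^ (α ^< κ))
    (A M : Type u) [TopologicalSpace A] [DiscreteTopology A]
    (hA : #A = α) (hM : #M = μ)
    (h : ∃ ν < κ, (2 : Cardinal.{u}) ^ (α ^ ν) = (2 : Cardinal.{u}) ^ (α ^< κ)) :
    @dens (∀ _ : M, A) (boxTopology κ fun _ => A) = α ^< κ := by
  have hAne : Nonempty A := by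
    rw [← Cardinal.mk_ne_zero_iff, hA]
    exact fun h0 => by simp [h0] at hα
  have hκβ : κ ≤ α ^< κ := by
    by_contra hlt
    push_neg at hlt
    have h1 : α ^ (α ^< κ) ≤ α ^< κ := Cardinal.le_powerlt α hlt
    have h2 : (2 : Cardinal) ^ (α ^< κ) ≤ α ^ (α ^< κ) :=
      Cardinal.power_le_power_right hα
    exact absurd ((Cardinal.cantor _).trans_le (h2.trans h1)) (lt_irrefl _)
  have hβℵ : ℵ₀ ≤ α ^< κ := hκ.trans hκβ
  have hαβ : α ≤ α ^< κ := by
    have := Cardinal.le_powerlt α (lt_of_lt_of_le one_lt_aleph0 hκ)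
    rwa [Cardinal.power_one] at this
  -- lower bound: every dense set has cardinality at least α ^< κ
  have lower : ∀ Ds : Set (∀ _ : M, A), @Dense _ (boxTopology κ fun _ => A) Ds →
      α ^< κ ≤ #Ds := by
    intro Ds hDs
    rw [Cardinal.powerlt_le]
    intro lam hlam
    have h1 : #(Quotient.out lam) ≤ #M := by
      rw [Cardinal.mk_out, hM]; exact hlam.le.trans hμ1
    obtain ⟨ι⟩ := (Cardinal.le_def _ _).mp h1
    classical
    set Uf : (Quotient.out lam → A) → M → Set A := fun f m =>
      if hm : ∃ i, ι i = m then {f hm.choose} else Set.univ with hUf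
    have hmemf : ∀ (f : Quotient.out lam → A) (x : M → A),
        x ∈ Set.pi Set.univ (Uf f) ↔ ∀ i, x (ι i) = f i := by
      intro f x
      constructor
      · intro hx i
        have := hx (ι i) (Set.mem_univ _)
        rw [hUf] at this
        simp only at this
        rw [dif_pos ⟨i, rfl⟩] at this
        have hch : ι (⟨i, rfl⟩ : ∃ i', ι i' = ι i).choose = ι i :=
          (⟨i, rfl⟩ : ∃ i', ι i' = ι i).choose_spec
        have : x (ι i) = f (⟨i, rfl⟩ : ∃ i', ι i' = ι i).choose := this
        rwa [ι.injective hch] at this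
      · intro hx m _
        rw [hUf]
        simp only
        by_cases hm : ∃ i, ι i = m
        · rw [dif_pos hm]
          have := hx hm.choose
          rw [hm.choose_spec] at this
          exact this
        · rw [dif_neg hm]; trivial
    have hbox : ∀ f : Quotient.out lam → A,
        @IsOpen _ (boxTopology κ fun _ => A) (Set.pi Set.univ (Uf f)) := by
      intro f
      refine isOpen_generateFrom_of_mem ⟨Uf f, fun m => isOpen_discrete _, ?_, rfl⟩
      refine lt_of_le_of_lt (le_trans (Cardinal.mk_le_mk_of_subset
        (t := Set.range ι) ?_) (Cardinal.mk_range_le)) ?_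
      · intro m hm
        by_contra hno
        have : Uf f m = Set.univ := by rw [hUf]; simp only; rw [dif_neg]; exact fun ⟨i, hi⟩ => hno ⟨i, hi⟩
        exact hm this
      · rwa [Cardinal.mk_out]
    have hne : ∀ f : Quotient.out lam → A, (Set.pi Set.univ (Uf f)).Nonempty := by
      intro f
      refine ⟨fun m => if hm : ∃ i, ι i = m then f hm.choose else Classical.arbitrary A, ?_⟩
      rw [hmemf]
      intro i
      rw [dif_pos ⟨i, rfl⟩]
      congr 1
      exact ι.injective (⟨i, rfl⟩ : ∃ i', ι i' = ι i).choose_spec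
    have hpick : ∀ f : Quotient.out lam → A,
        ∃ x, x ∈ Set.pi Set.univ (Uf f) ∧ x ∈ Ds := by
      intro f
      obtain ⟨x, hx1, hx2⟩ := (@dense_iff_inter_open _ (boxTopology κ fun _ => A) Ds).mp hDs _ (hbox f) (hne f)
      exact ⟨x, hx1, hx2⟩
    choose g hg1 hg2 using hpick
    have hginj : Function.Injective g := by
      intro f f' hff
      funext i
      have e1 : g f (ι i) = f i := (hmemf f (g f)).mp (hg1 f) i
      have e2 : g f' (ι i) = f' i := (hmemf f' (g f')).mp (hg1 f') i
      rw [← e1, ← e2, hff]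
    have : #(Quotient.out lam → A) ≤ #Ds := by
      refine Cardinal.mk_le_of_injective (f := fun f => (⟨g f, hg2 f⟩ : ↥Ds)) ?_
      intro f f' hff
      exact hginj (by simpa using congrArg Subtype.val hff)
    rwa [← Cardinal.power_def, Cardinal.mk_out, hA] at this
  
  -- upper bound: construct a dense set of size at most α ^< κ
  obtain ⟨ν, hν, hνe⟩ := h
  classical
  set B := (Quotient.out ν → A) with hBdef
  have hB : #B = α ^ ν := by
    rw [hBdef, ← Cardinal.power_def, Cardinal.mk_out, hA]
  have hBne : Nonempty B := ⟨fun _ => Classical.arbitrary A⟩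
  have hMe : #M ≤ #(Set B) := by
    rw [hM, Cardinal.mk_set, hB, hνe]; exact hμ2
  obtain ⟨e⟩ := (Cardinal.le_def _ _).mp hMe
  set fam : ∀ j : (Cardinal.ord κ).ToType,
      ((LjT κ j → B) × (LjT κ j → LjT κ j → Prop) × (LjT κ j → A) × A) → (M → A) :=
    fun j p => approx (⇑e) (LjT κ j) p.1 p.2.1 p.2.2.1 p.2.2.2 with hfam
  set D : Set (M → A) := ⋃ j, Set.range (fam j) with hDdef
  have hDcard : #↥D ≤ α ^< κ := by
    rw [hDdef]
    refine le_trans (Cardinal.mk_iUnion_le _) ?_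
    have hsup : ∀ j, #↥(Set.range (fam j)) ≤ α ^< κ := by
      intro j
      refine le_trans Cardinal.mk_range_le ?_
      have hc := LjT_lt κ j
      have e1 : #(LjT κ j → B) ≤ α ^< κ := by
        rw [← Cardinal.power_def, hB, ← Cardinal.power_mul]
        exact Cardinal.le_powerlt α (Cardinal.mul_lt_of_lt hκ hν hc)
      have e2 : #(LjT κ j → LjT κ j → Prop) ≤ α ^< κ := by
        have ePow : #(LjT κ j → LjT κ j → Prop) = #(Set (LjT κ j)) ^ #(LjT κ j) :=
          (Cardinal.power_def (Set (LjT κ j)) (LjT κ j)).symm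
        rw [ePow, Cardinal.mk_set, ← Cardinal.power_mul]
        calc (2 : Cardinal) ^ (#(LjT κ j) * #(LjT κ j))
            ≤ α ^ (#(LjT κ j) * #(LjT κ j)) := Cardinal.power_le_power_right hα
          _ ≤ α ^< κ := Cardinal.le_powerlt α (Cardinal.mul_lt_of_lt hκ hc hc)
      have e3 : #(LjT κ j → A) ≤ α ^< κ := by
        rw [← Cardinal.power_def, hA]
        exact Cardinal.le_powerlt α hc
      have e4 : #A ≤ α ^< κ := hA ▸ hαβ
      calc #((LjT κ j → B) × (LjT κ j → LjT κ j → Prop) × (LjT κ j → A) × A)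
          = #(LjT κ j → B) * (#(LjT κ j → LjT κ j → Prop) * (#(LjT κ j → A) * #A)) := by
            simp only [Cardinal.mk_prod, Cardinal.lift_id]
        _ ≤ (α ^< κ) * ((α ^< κ) * ((α ^< κ) * (α ^< κ))) :=
            mul_le_mul' e1 (mul_le_mul' e2 (mul_le_mul' e3 e4))
        _ = α ^< κ := by
            rw [Cardinal.mul_eq_self hβℵ, Cardinal.mul_eq_self hβℵ,
              Cardinal.mul_eq_self hβℵ]
    have hJ : #((Cardinal.ord κ).ToType) = κ := by
      rw [Cardinal.mk_toType, Cardinal.card_ord]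
    have hJne : Nonempty ((Cardinal.ord κ).ToType) := by
      rw [← Cardinal.mk_ne_zero_iff, hJ]
      exact (aleph0_pos.trans_le hκ).ne'
    haveI := hJne
    calc #((Cardinal.ord κ).ToType) * ⨆ j, #↥(Set.range (fam j))
        ≤ κ * (α ^< κ) := by rw [hJ]; exact mul_le_mul' le_rfl (ciSup_le' hsup)
      _ ≤ (α ^< κ) * (α ^< κ) := mul_le_mul' hκβ le_rfl
      _ = α ^< κ := Cardinal.mul_eq_self hβℵ
  have hDd : @Dense _ (boxTopology κ fun _ => A) D := by
    refine dense_box hκ ?_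
    intro Uf hUo hUc hUn
    obtain ⟨x₀, hx₀⟩ := hUn
    set R := {m | Uf m ≠ Set.univ} with hR
    have hcR : #(↥R × ↥R) < κ := by
      simp only [Cardinal.mk_prod, Cardinal.lift_id]
      exact Cardinal.mul_lt_of_lt hκ hUc hUc
    obtain ⟨j, hj⟩ := LjT_exists κ hcR
    obtain ⟨σ⟩ := Cardinal.eq.mp hj
    have hsep : ∀ p : ↥R × ↥R, ∃ b : B, (p.1 : M) ≠ (p.2 : M) →
        ¬((b ∈ e (p.1 : M)) ↔ (b ∈ e (p.2 : M))) := by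
      intro p
      by_cases hpe : (p.1 : M) = (p.2 : M)
      · exact ⟨Classical.arbitrary B, fun hne => absurd hpe hne⟩
      · have h1 : e (p.1 : M) ≠ e (p.2 : M) := fun hh => hpe (e.injective hh)
        have h2 : ¬∀ b, b ∈ e (p.1 : M) ↔ b ∈ e (p.2 : M) := fun hb => h1 (Set.ext hb)
        obtain ⟨b, hb⟩ := not_forall.mp h2
        exact ⟨b, fun _ => hb⟩
    choose Fb hFb using hsep
    set F : LjT κ j → B := fun l => Fb (σ l) with hF
    set G : LjT κ j → LjT κ j → Prop := fun l l' => F l' ∈ e ((σ l).1 : M) with hG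
    set hv : LjT κ j → A := fun l => x₀ ((σ l).1 : M) with hval
    set a₀ : A := Classical.arbitrary A with ha₀
    refine ⟨approx (⇑e) (LjT κ j) F G hv a₀, ?_, ?_⟩
    · intro m _
      by_cases hm : m ∈ R
      · have hwit : ∃ l, (fun l' => F l' ∈ e m) = G l := by
          refine ⟨σ.symm (⟨m, hm⟩, ⟨m, hm⟩), ?_⟩
          funext l'
          rw [hG]
          simp only [Equiv.apply_symm_apply]
        have key : ∀ l₀ : LjT κ j, ((fun l' => F l' ∈ e m) = G l₀) → hv l₀ = x₀ m := by
          intro l₀ heq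
          by_cases hmm : ((σ l₀).1 : M) = m
          · rw [hval]; simp only; rw [hmm]
          · exfalso
            have happ := congrFun heq (σ.symm (⟨m, hm⟩, (σ l₀).1))
            rw [hG] at happ
            simp only [hF, Equiv.apply_symm_apply] at happ
            exact hFb (⟨m, hm⟩, (σ l₀).1) (fun hh => hmm hh.symm) (Iff.of_eq happ)
        show approx (⇑e) (LjT κ j) F G hv a₀ m ∈ Uf m
        rw [approx, dif_pos hwit, key _ hwit.choose_spec]
        exact hx₀ m (Set.mem_univ m)
      · have hUfm : Uf m = Set.univ := by
          by_contra hne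
          exact hm hne
        rw [hUfm]
        trivial
    · rw [hDdef]
      exact Set.mem_iUnion.mpr ⟨j, ⟨(F, G, hv, a₀), rfl⟩⟩
  show sInf {c | ∃ Ds : Set (∀ _ : M, A),
      @Dense _ (boxTopology κ fun _ => A) Ds ∧ #Ds = c} = α ^< κ
  refine le_antisymm (le_trans (csInf_le' ⟨D, hDd, rfl⟩) hDcard)
    (le_csInf ⟨_, Set.univ, @dense_univ _ (boxTopology κ fun _ => A), rfl⟩ ?_)
  rintro b ⟨Ds, hDs, rfl⟩
  exact lower Ds hDs
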